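/- Fix j1 ∈ [n] and i, l ∈ [d²]. The mixed second-order partial derivative ∂²(α(x)_{j1}^{−1})/∂x_i∂x_l equals 2α(x)_{j1}^{−1}·⟨f(x)_{j1}, 𝖠_{[j1],l}⟩·⟨f(x)_{j1}, 𝖠_{[j1],i}⟩ − α(x)_{j1}^{−1}·⟨f(x)_{j1}, 𝖠_{[j1],i} ∘ 𝖠_{[j1],l}⟩. -/

import Mathlib

open Matrix Kronecker

noncomputable section

/-- The `i`-th column of the block `𝖠_{[j1]} ∈ ℝ^{n × d²}` of `𝖠 = A1 ⊗ A2`: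
`(𝖠_{[j1],i})_{i2} = 𝖠_{(j1,i2), i}`. -/
def Acol {n d : ℕ} (A1 A2 : Matrix (Fin n) (Fin d) ℝ) (j1 : Fin n)
    (i : Fin d × Fin d) : Fin n → ℝ :=
  fun i2 => (A1 ⊗ₖ A2) (j1, i2) i

/-- `u(x)_{j1} = exp(𝖠_{[j1]} x) ∈ ℝⁿ` (entrywise `exp`), for `𝖠 = A1 ⊗ A2`. -/
def uvec {n d : ℕ} (A1 A2 : Matrix (Fin n) (Fin d) ℝ) (j1 : Fin n)
    (x : Fin d × Fin d → ℝ) : Fin n → ℝ :=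
  fun i2 => Real.exp (∑ q : Fin d × Fin d, (A1 ⊗ₖ A2) (j1, i2) q * x q)

/-- `α(x)_{j1} = ⟨exp(𝖠_{[j1]} x), 1_n⟩`. -/
def alphaval {n d : ℕ} (A1 A2 : Matrix (Fin n) (Fin d) ℝ) (j1 : Fin n)
    (x : Fin d × Fin d → ℝ) : ℝ :=
  ∑ i2 : Fin n, uvec A1 A2 j1 x i2

/-- `f(x)_{j1} = α(x)_{j1}⁻¹ · u(x)_{j1} ∈ ℝⁿ`. -/
def fvec {n d : ℕ} (A1 A2 : Matrix (Fin n) (Fin d) ℝ) (j1 : Fin n)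
    (x : Fin d × Fin d → ℝ) : Fin n → ℝ :=
  fun i2 => (alphaval A1 A2 j1 x)⁻¹ * uvec A1 A2 j1 x i2

/-- Auxiliary: the linear functional `z ↦ ∑ q, 𝖠_{(j1,i2),q} z q`. -/
def Lmap {n d : ℕ} (A1 A2 : Matrix (Fin n) (Fin d) ℝ) (j1 : Fin n) (i2 : Fin n) :
    (Fin d × Fin d → ℝ) →L[ℝ] ℝ :=
  ∑ q : Fin d × Fin d, (A1 ⊗ₖ A2) (j1, i2) q • ContinuousLinearMap.proj q

lemma Lmap_apply {n d : ℕ} (A1 A2 : Matrix (Fin n) (Fin d) ℝ) (j1 : Fin n)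
    (i2 : Fin n) (z : Fin d × Fin d → ℝ) :
    Lmap A1 A2 j1 i2 z = ∑ q : Fin d × Fin d, (A1 ⊗ₖ A2) (j1, i2) q * z q := by
  simp [Lmap]

lemma Lmap_single {n d : ℕ} (A1 A2 : Matrix (Fin n) (Fin d) ℝ) (j1 : Fin n)
    (i2 : Fin n) (i : Fin d × Fin d) :
    Lmap A1 A2 j1 i2 (Pi.single i 1) = Acol A1 A2 j1 i i2 := by
  rw [Lmap_apply]
  simp [Pi.single_apply, Acol]

lemma hasFDerivAt_uvec {n d : ℕ} (A1 A2 : Matrix (Fin n) (Fin d) ℝ) (j1 : Fin n)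
    (i2 : Fin n) (y : Fin d × Fin d → ℝ) :
    HasFDerivAt (fun z => uvec A1 A2 j1 z i2)
      (uvec A1 A2 j1 y i2 • Lmap A1 A2 j1 i2) y := by
  have hfun : (fun z => uvec A1 A2 j1 z i2)
      = fun z => Real.exp (Lmap A1 A2 j1 i2 z) := by
    funext z; rw [uvec, Lmap_apply]
  rw [hfun]
  have h := (Real.hasDerivAt_exp (Lmap A1 A2 j1 i2 y)).comp_hasFDerivAt y
    (Lmap A1 A2 j1 i2).hasFDerivAt
  have : uvec A1 A2 j1 y i2 = Real.exp (Lmap A1 A2 j1 i2 y) := by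
    rw [uvec, Lmap_apply]
  rw [this]
  exact h

lemma hasFDerivAt_alphaval {n d : ℕ} (A1 A2 : Matrix (Fin n) (Fin d) ℝ)
    (j1 : Fin n) (y : Fin d × Fin d → ℝ) :
    HasFDerivAt (alphaval A1 A2 j1)
      (∑ i2 : Fin n, uvec A1 A2 j1 y i2 • Lmap A1 A2 j1 i2) y := by
  have : alphaval A1 A2 j1 = fun z => ∑ i2 : Fin n, uvec A1 A2 j1 z i2 := rfl
  rw [this]
  exact HasFDerivAt.fun_sum fun i2 _ => hasFDerivAt_uvec A1 A2 j1 i2 y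

lemma alphaval_pos {n d : ℕ} (A1 A2 : Matrix (Fin n) (Fin d) ℝ) (j1 : Fin n)
    (y : Fin d × Fin d → ℝ) : 0 < alphaval A1 A2 j1 y := by
  have : Nonempty (Fin n) := ⟨j1⟩
  exact Finset.sum_pos (fun i2 _ => Real.exp_pos _) Finset.univ_nonempty

lemma hasFDerivAt_alphaval_inv {n d : ℕ} (A1 A2 : Matrix (Fin n) (Fin d) ℝ)
    (j1 : Fin n) (y : Fin d × Fin d → ℝ) :
    HasFDerivAt (fun z => (alphaval A1 A2 j1 z)⁻¹)
      ((-(alphaval A1 A2 j1 y ^ 2)⁻¹) •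
        ∑ i2 : Fin n, uvec A1 A2 j1 y i2 • Lmap A1 A2 j1 i2) y :=
  (hasDerivAt_inv (alphaval_pos A1 A2 j1 y).ne').comp_hasFDerivAt y
    (hasFDerivAt_alphaval A1 A2 j1 y)

lemma fderiv_alphaval_inv {n d : ℕ} (A1 A2 : Matrix (Fin n) (Fin d) ℝ)
    (j1 : Fin n) (i : Fin d × Fin d) (y : Fin d × Fin d → ℝ) :
    fderiv ℝ (fun z => (alphaval A1 A2 j1 z)⁻¹) y (Pi.single i 1)
      = -(alphaval A1 A2 j1 y ^ 2)⁻¹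
          * ∑ i2 : Fin n, uvec A1 A2 j1 y i2 * Acol A1 A2 j1 i i2 := by
  rw [(hasFDerivAt_alphaval_inv A1 A2 j1 y).fderiv]
  simp [ContinuousLinearMap.sum_apply, Lmap_single, Finset.mul_sum]

/-- For fixed `j1 ∈ [n]` and `i, l ∈ [d²]`,
`∂² (α(x)_{j1}⁻¹) / ∂x_i ∂x_l
  = 2 α(x)_{j1}⁻¹ ⟨f(x)_{j1}, 𝖠_{[j1],l}⟩ ⟨f(x)_{j1}, 𝖠_{[j1],i}⟩
    − α(x)_{j1}⁻¹ ⟨f(x)_{j1}, 𝖠_{[j1],i} ∘ 𝖠_{[j1],l}⟩`. -/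
theorem second_deriv_alphaval_inv (n d : ℕ) (A1 A2 : Matrix (Fin n) (Fin d) ℝ)
    (j1 : Fin n) (i l : Fin d × Fin d) (x : Fin d × Fin d → ℝ) :
    fderiv ℝ (fun y : Fin d × Fin d → ℝ =>
        fderiv ℝ (fun z : Fin d × Fin d → ℝ => (alphaval A1 A2 j1 z)⁻¹) y
          (Pi.single i 1))
      x (Pi.single l 1)
      = 2 * (alphaval A1 A2 j1 x)⁻¹
            * (∑ i2 : Fin n, fvec A1 A2 j1 x i2 * Acol A1 A2 j1 l i2)
            * (∑ i2 : Fin n, fvec A1 A2 j1 x i2 * Acol A1 A2 j1 i i2)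
        - (alphaval A1 A2 j1 x)⁻¹
            * ∑ i2 : Fin n, fvec A1 A2 j1 x i2
                * (Acol A1 A2 j1 i i2 * Acol A1 A2 j1 l i2) := by
  set α := alphaval A1 A2 j1 with hα
  -- rewrite the inner function
  have hfun : (fun y : Fin d × Fin d → ℝ =>
      fderiv ℝ (fun z : Fin d × Fin d → ℝ => (alphaval A1 A2 j1 z)⁻¹) y
        (Pi.single i 1))
      = fun y => (-(α y * α y)⁻¹)
          * ∑ i2 : Fin n, uvec A1 A2 j1 y i2 * Acol A1 A2 j1 i i2 := by
    funext y
    rw [fderiv_alphaval_inv A1 A2 j1 i y, sq]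
  rw [hfun]
  -- derivative of the first factor
  have hinv : ∀ y, HasFDerivAt (fun z => (α z)⁻¹)
      ((-(α y ^ 2)⁻¹) • ∑ i2 : Fin n, uvec A1 A2 j1 y i2 • Lmap A1 A2 j1 i2) y :=
    hasFDerivAt_alphaval_inv A1 A2 j1
  set Dα := ∑ i2 : Fin n, uvec A1 A2 j1 x i2 • Lmap A1 A2 j1 i2 with hDα
  have hneg : HasFDerivAt (fun y => -(α y * α y)⁻¹)
      (-((α x)⁻¹ • ((-(α x ^ 2)⁻¹) • Dα) + (α x)⁻¹ • ((-(α x ^ 2)⁻¹) • Dα))) x := by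
    have : (fun y => -(α y * α y)⁻¹) = fun y => -((α y)⁻¹ * (α y)⁻¹) := by
      funext y; rw [mul_inv]
    rw [this]
    exact ((hinv x).mul (hinv x)).neg
  -- derivative of the sum factor
  have hS : HasFDerivAt
      (fun y => ∑ i2 : Fin n, uvec A1 A2 j1 y i2 * Acol A1 A2 j1 i i2)
      (∑ i2 : Fin n, Acol A1 A2 j1 i i2 • (uvec A1 A2 j1 x i2 • Lmap A1 A2 j1 i2)) x :=
    HasFDerivAt.fun_sum fun i2 _ =>
      (hasFDerivAt_uvec A1 A2 j1 i2 x).mul_const (Acol A1 A2 j1 i i2)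
  have hG := hneg.fun_mul hS
  rw [hG.fderiv]
  have hDα_single : ∀ (j : Fin d × Fin d),
      Dα (Pi.single j 1) = ∑ i2 : Fin n, uvec A1 A2 j1 x i2 * Acol A1 A2 j1 j i2 := by
    intro j
    simp [hDα, ContinuousLinearMap.sum_apply, Lmap_single]
  have hS_single :
      (∑ i2 : Fin n, Acol A1 A2 j1 i i2 • (uvec A1 A2 j1 x i2 • Lmap A1 A2 j1 i2))
        (Pi.single l 1)
      = ∑ i2 : Fin n, Acol A1 A2 j1 i i2 * (uvec A1 A2 j1 x i2 * Acol A1 A2 j1 l i2) := by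
    simp [ContinuousLinearMap.sum_apply, Lmap_single]
  simp only [ContinuousLinearMap.add_apply, ContinuousLinearMap.smul_apply,
    ContinuousLinearMap.neg_apply, hDα_single, hS_single, smul_eq_mul]
  -- now a pure algebraic identity
  set Si := ∑ i2 : Fin n, uvec A1 A2 j1 x i2 * Acol A1 A2 j1 i i2 with hSi
  set Sl := ∑ i2 : Fin n, uvec A1 A2 j1 x i2 * Acol A1 A2 j1 l i2 with hSl
  have hT : (∑ i2 : Fin n, Acol A1 A2 j1 i i2 * (uvec A1 A2 j1 x i2 * Acol A1 A2 j1 l i2))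
      = ∑ i2 : Fin n, uvec A1 A2 j1 x i2 * (Acol A1 A2 j1 i i2 * Acol A1 A2 j1 l i2) := by
    apply Finset.sum_congr rfl; intro i2 _; ring
  rw [hT]
  set T := ∑ i2 : Fin n, uvec A1 A2 j1 x i2 * (Acol A1 A2 j1 i i2 * Acol A1 A2 j1 l i2)
  have hfv1 : (∑ i2 : Fin n, fvec A1 A2 j1 x i2 * Acol A1 A2 j1 l i2) = (α x)⁻¹ * Sl := by
    rw [hSl, Finset.mul_sum]
    exact Finset.sum_congr rfl fun i2 _ => by rw [fvec]; ring
  have hfv2 : (∑ i2 : Fin n, fvec A1 A2 j1 x i2 * Acol A1 A2 j1 i i2) = (α x)⁻¹ * Si := by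
    rw [hSi, Finset.mul_sum]
    exact Finset.sum_congr rfl fun i2 _ => by rw [fvec]; ring
  have hfv3 : (∑ i2 : Fin n, fvec A1 A2 j1 x i2
      * (Acol A1 A2 j1 i i2 * Acol A1 A2 j1 l i2)) = (α x)⁻¹ * T := by
    rw [Finset.mul_sum]
    exact Finset.sum_congr rfl fun i2 _ => by rw [fvec]; ring
  rw [hfv1, hfv2, hfv3, sq, mul_inv]
  ring
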